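/- Let k be an infinite field and m, n ≥ 1, t ≥ 0, N ≥ 0 integers. Let P ⊆ R = k[X_1,…,X_m,Z_1,…,Z_n] be a prime ideal such that the Krull dimension of R/P equals n + t. If there exists C_0 ∈ k[X]_{≤N} with Z_1 − C_0 ∈ P, then the k-subspace k[X]_{≤N} ∩ P has codimension ≥ N+1 in k[X]_{≤N} (equivalently, the image of k[X]_{≤N} under the quotient map R → R/P has k-dimension ≥ N+1); consequently the set {C ∈ k[X]_{≤N} : Z_1 − C ∈ P} is a coset of k[X]_{≤N} ∩ P, an affine subspace of codimension ≥ N+1. -/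

import Mathlib

open MvPolynomial Pointwise

/-- The `k`-subspace `k[X]_{≤ N}` of `R = k[X_1,…,X_m,Z_1,…,Z_n]`
(the `X`-variables indexed by `Sum.inl`, the `Z`-variables by `Sum.inr`),
consisting of the polynomials in the `X`-variables of total degree `≤ N`. -/
noncomputable def degLE (k : Type*) [Field k] (m n N : ℕ) :
    Submodule k (MvPolynomial (Fin m ⊕ Fin n) k) :=
  (MvPolynomial.restrictTotalDegree (Fin m) k N).map
    (MvPolynomial.rename (Sum.inl : Fin m → Fin m ⊕ Fin n) :
      MvPolynomial (Fin m) k →ₐ[k] MvPolynomial (Fin m ⊕ Fin n) k).toLinearMap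

set_option maxHeartbeats 1000000

namespace Stmt0Aux

theorem degree_single {σ : Type*} (i : σ) (e : ℕ) : (Finsupp.single i e).degree = e := by
  rcases eq_or_ne e 0 with rfl | he
  · simp [Finsupp.degree]
  · rw [Finsupp.degree_apply, Finsupp.support_single_ne_zero _ he, Finset.sum_singleton,
      Finsupp.single_eq_same]




variable {k : Type*} [Field k]

theorem linearIndependent_pow {A : Type*} [CommRing A] [Algebra k A] {x : A}
    (hx : Transcendental k x) (N : ℕ) :
    LinearIndependent k (fun j : Fin (N + 1) => x ^ (j : ℕ)) := by
  rw [transcendental_iff] at hx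
  rw [linearIndependent_iff']
  intro s g hsum i hi
  have h0 : (Polynomial.aeval x) (∑ j ∈ s, Polynomial.C (g j) * Polynomial.X ^ (j : ℕ)) = 0 := by
    simpa [Algebra.smul_def] using hsum
  have hp := hx _ h0
  have := congrArg (fun p => Polynomial.coeff p (i : ℕ)) hp
  simp only [Polynomial.finset_sum_coeff, Polynomial.coeff_C_mul, Polynomial.coeff_X_pow,
    Polynomial.coeff_zero] at this
  rwa [Finset.sum_eq_single i (fun j hj hne => by
      rw [if_neg (by simpa [Fin.val_eq_val] using (Ne.symm hne)), mul_zero])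
      (fun h => absurd hi h), if_pos rfl, mul_one] at this

/-- strict mono of `Ideal.map` along a surjective hom whose kernel is inside the smaller ideal -/
theorem map_lt_map_of_surjective {R S : Type*} [CommRing R] [CommRing S] (f : R →+* S)
    (hf : Function.Surjective f) {I J : Ideal R} (hker : RingHom.ker f ≤ I) (h : I < J) :
    I.map f < J.map f := by
  refine lt_of_le_of_ne (Ideal.map_mono h.le) fun he => h.ne ?_
  have h1 := Ideal.comap_map_of_surjective f hf I
  have h2 := Ideal.comap_map_of_surjective f hf J
  have : RingHom.ker f ≤ J := hker.trans h.le
  rw [← sup_eq_left.mpr hker, ← sup_eq_left.mpr this]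
  simp only [RingHom.ker] at h1 h2 ⊢
  rw [← h1, ← h2, he]

theorem comap_lt_comap_of_surjective {R S : Type*} [CommRing R] [CommRing S] (f : R →+* S)
    (hf : Function.Surjective f) {I J : Ideal S} (h : I < J) :
    I.comap f < J.comap f := by
  refine lt_of_le_of_ne (Ideal.comap_mono h.le) fun he => h.ne ?_
  rw [← Ideal.map_comap_of_surjective f hf I, ← Ideal.map_comap_of_surjective f hf J, he]








/-- a polynomial homogeneous of degree 0 is a constant -/
theorem isHomogeneous_zero_eq_C {σ : Type*} {p : MvPolynomial σ k}
    (hp : p.IsHomogeneous 0) : p = C (coeff 0 p) := by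
  classical
  ext μ
  rcases eq_or_ne μ 0 with rfl | hμ
  · simp
  · rw [hp.coeff_eq_zero (by simpa [Finsupp.degree_eq_zero_iff] using hμ), coeff_C, if_neg
      (by exact fun h => hμ h.symm)]

/-- the top homogeneous component of a nonzero polynomial is nonzero -/
theorem homogeneousComponent_totalDegree_ne_zero {σ : Type*} {f : MvPolynomial σ k}
    (hf : f ≠ 0) : homogeneousComponent f.totalDegree f ≠ 0 := by
  obtain ⟨μ, hμ, hdeg⟩ := Finset.exists_mem_eq_sup f.support
    (by simpa using hf) (fun μ => μ.sum fun _ e => e)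
  intro h0
  have : coeff μ (homogeneousComponent f.totalDegree f) = coeff μ f := by
    rw [coeff_homogeneousComponent, if_pos]
    rw [totalDegree, hdeg]
    rfl
  rw [h0] at this
  exact (mem_support_iff.mp hμ) (by simpa using this.symm)

/-- for homogeneous `q` of degree `e` on `Fin (r+1)`, the coefficient of `X 0 ^ e`
is the evaluation at `(1, 0, …, 0)`. -/
theorem coeff_single_zero_eq_eval {r e : ℕ} {q : MvPolynomial (Fin (r + 1)) k}
    (hq : q.IsHomogeneous e) :
    coeff (Finsupp.single 0 e) q = eval (Fin.cons 1 0) q := by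
  rw [eval_eq]
  rw [Finset.sum_eq_single (Finsupp.single 0 e)]
  · rcases eq_or_ne e 0 with rfl | he
    · simp
    · rw [Finsupp.support_single_ne_zero _ he, Finset.prod_singleton, Fin.cons_zero,
        one_pow, mul_one]
  · intro μ hμ hne
    have hsupp : ¬ (μ.support ⊆ {0}) := by
      intro hs
      apply hne
      have := Finsupp.support_subset_singleton.mp hs
      have hdeg : μ.degree = e := by
        rw [Finsupp.degree_eq_weight_one]; exact hq (mem_support_iff.mp hμ)
      rw [this]
      congr 1
      rw [this, degree_single] at hdeg
      exact hdeg
    obtain ⟨i, hi, hi0⟩ := Finset.not_subset.mp hsupp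
    have hi0' : i ≠ 0 := by simpa using hi0
    obtain ⟨j, rfl⟩ := Fin.exists_succ_eq.mpr hi0'
    apply mul_eq_zero_of_right
    apply Finset.prod_eq_zero hi
    rw [Fin.cons_succ]
    exact zero_pow (Finsupp.mem_support_iff.mp hi)
  · intro h
    rw [notMem_support_iff.mp h, zero_mul]





variable {k : Type*} [Field k]

variable {r : ℕ}

/-- substitution `X 0 ↦ c₀ • X 0`, `X (j+1) ↦ X (j+1) + c_{j+1} • X 0` -/
noncomputable def sub1 (v : Fin (r + 1) → k) :
    MvPolynomial (Fin (r + 1)) k →ₐ[k] MvPolynomial (Fin (r + 1)) k :=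
  aeval (fun i => Fin.cases (C (v 0) * X 0)
    (fun j => X j.succ + C (v j.succ) * X 0) i)

@[simp] theorem sub1_X_zero (v : Fin (r + 1) → k) :
    sub1 v (X 0) = C (v 0) * X 0 := by simp [sub1]

@[simp] theorem sub1_X_succ (v : Fin (r + 1) → k) (j : Fin r) :
    sub1 v (X j.succ) = X j.succ + C (v j.succ) * X 0 := by simp [sub1]

/-- `sub1 v` is an automorphism when `v 0 ≠ 0`. -/
noncomputable def sub1Equiv (v : Fin (r + 1) → k) (hv : v 0 ≠ 0) :
    MvPolynomial (Fin (r + 1)) k ≃ₐ[k] MvPolynomial (Fin (r + 1)) k := by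
  refine AlgEquiv.ofAlgHom (sub1 v)
    (sub1 (Fin.cons (v 0)⁻¹ (fun j => - v j.succ * (v 0)⁻¹))) ?_ ?_
  · apply MvPolynomial.algHom_ext
    intro i
    induction i using Fin.cases with
    | zero =>
      simp only [AlgHom.comp_apply, AlgHom.id_apply]
      rw [sub1_X_zero, map_mul, sub1_X_zero]
      simp only [Fin.cons_zero, algHom_C]
      rw [algebraMap_eq, ← mul_assoc, ← map_mul, inv_mul_cancel₀ hv]
      simp
    | succ j =>
      simp only [AlgHom.comp_apply, AlgHom.id_apply]
      rw [sub1_X_succ, map_add, map_mul, sub1_X_succ, sub1_X_zero, algHom_C]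
      simp only [Fin.cons_succ, Fin.cons_zero]
      rw [algebraMap_eq, ← mul_assoc, ← map_mul,
        show -v j.succ * (v 0)⁻¹ * v 0 = -v j.succ by field_simp]
      ring_nf
      rw [map_neg]
      ring
  · apply MvPolynomial.algHom_ext
    intro i
    induction i using Fin.cases with
    | zero =>
      simp only [AlgHom.comp_apply, AlgHom.id_apply]
      rw [sub1_X_zero, map_mul, sub1_X_zero, algHom_C]
      simp only [Fin.cons_zero]
      rw [algebraMap_eq, ← mul_assoc, ← map_mul, mul_inv_cancel₀ hv]
      simp
    | succ j =>
      simp only [AlgHom.comp_apply, AlgHom.id_apply]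
      rw [sub1_X_succ, map_add, map_mul, sub1_X_succ, sub1_X_zero, algHom_C]
      simp only [Fin.cons_succ, Fin.cons_zero]
      rw [algebraMap_eq, ← mul_assoc, ← map_mul, neg_mul, map_neg]
      ring

theorem sub1Equiv_apply (v : Fin (r + 1) → k) (hv : v 0 ≠ 0) (p : MvPolynomial (Fin (r + 1)) k) :
    (sub1Equiv v hv) p = sub1 v p := rfl

theorem sub1_monomial_isHomogeneous (v : Fin (r + 1) → k) (μ : Fin (r + 1) →₀ ℕ) (c : k) :
    (sub1 v (monomial μ c)).IsHomogeneous μ.degree := by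
  rw [sub1, aeval_monomial]
  have : (IsHomogeneous · μ.degree : MvPolynomial (Fin (r+1)) k → Prop) ((algebraMap k _ c) *
      μ.prod fun i e => (Fin.cases (C (v 0) * X 0)
        (fun j => X j.succ + C (v j.succ) * X 0) i : MvPolynomial (Fin (r+1)) k) ^ e) := by
    have hprod : (μ.prod fun i e => (Fin.cases (C (v 0) * X 0)
        (fun j => X j.succ + C (v j.succ) * X 0) i : MvPolynomial (Fin (r+1)) k) ^ e
        ).IsHomogeneous μ.degree := by
      rw [Finsupp.prod, Finsupp.degree]
      apply IsHomogeneous.prod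
      intro i _
      have hbase : (Fin.cases (C (v 0) * X 0)
          (fun j => X j.succ + C (v j.succ) * X 0) i : MvPolynomial (Fin (r+1)) k
          ).IsHomogeneous 1 := by
        induction i using Fin.cases with
        | zero => exact isHomogeneous_C_mul_X _ _
        | succ j => exact (isHomogeneous_X _ _).add (isHomogeneous_C_mul_X _ _)
      simpa using hbase.pow (μ i)
    simpa [algebraMap_eq] using hprod.C_mul c
  simpa using this

theorem sub1_isHomogeneous (v : Fin (r + 1) → k) {q : MvPolynomial (Fin (r + 1)) k} {e : ℕ}
    (hq : q.IsHomogeneous e) : (sub1 v q).IsHomogeneous e := by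
  conv_lhs => rw [← support_sum_monomial_coeff q]
  rw [map_sum]
  apply IsHomogeneous.sum
  intro μ hμ
  have hdeg : μ.degree = e := by
    rw [Finsupp.degree_eq_weight_one]; exact hq (mem_support_iff.mp hμ)
  simpa [hdeg] using sub1_monomial_isHomogeneous v μ (coeff μ q)

theorem sub1_totalDegree_le (v : Fin (r + 1) → k) (g : MvPolynomial (Fin (r + 1)) k) :
    (sub1 v g).totalDegree ≤ g.totalDegree := by
  conv_lhs => rw [← support_sum_monomial_coeff g]
  rw [map_sum]
  refine le_trans (totalDegree_finset_sum _ _) (Finset.sup_le fun μ hμ => ?_)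
  refine le_trans (sub1_monomial_isHomogeneous v μ (coeff μ g)).totalDegree_le ?_
  rw [totalDegree]
  apply Finset.le_sup (f := fun s => s.sum fun _ e => e) hμ

theorem eval_aeval' {σ τ : Type*} (x : σ → k) (u : τ → MvPolynomial σ k)
    (g : MvPolynomial τ k) :
    eval x (aeval u g) = eval (fun i => eval x (u i)) g := by
  rw [aeval_def, MvPolynomial.eval₂_comp_left (eval x)]
  have h1 : (eval x).comp (algebraMap k (MvPolynomial σ k)) = RingHom.id k := by
    ext a; simp [algebraMap_eq]
  rw [h1]
  rfl

theorem eval_cons_one_sub1 (v : Fin (r + 1) → k) (g : MvPolynomial (Fin (r + 1)) k) :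
    eval (Fin.cons 1 0) (sub1 v g) = eval v g := by
  rw [sub1, eval_aeval']
  have hfun : (fun i => (eval (Fin.cons 1 0 : Fin (r + 1) → k))
      ((Fin.cases (C (v 0) * X 0) (fun j => X j.succ + C (v j.succ) * X 0) i :
        MvPolynomial (Fin (r + 1)) k))) = v := by
    funext i
    induction i using Fin.cases with
    | zero => simp
    | succ j => simp
  rw [hfun]




theorem cons_eq_single {r : ℕ} (d : ℕ) :
    (Finsupp.cons d (0 : Fin r →₀ ℕ)) = Finsupp.single (0 : Fin (r + 1)) d := by
  ext i
  induction i using Fin.cases with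
  | zero => simp
  | succ j => simp [Finsupp.cons_succ, Finsupp.single_apply, (Fin.succ_ne_zero j).symm]

theorem eval₂_finSuccEquiv {r : ℕ} (h : MvPolynomial (Fin (r + 1)) k) :
    Polynomial.eval₂
      ((rename (Fin.succ : Fin r → Fin (r + 1)) : MvPolynomial (Fin r) k →ₐ[k] _) :
        MvPolynomial (Fin r) k →+* MvPolynomial (Fin (r + 1)) k)
      (X 0) (finSuccEquiv k r h) = h := by
  have key : (Polynomial.eval₂RingHom
      ((rename (Fin.succ : Fin r → Fin (r + 1)) : MvPolynomial (Fin r) k →ₐ[k] _) :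
        MvPolynomial (Fin r) k →+* MvPolynomial (Fin (r + 1)) k) (X 0)).comp
      ((finSuccEquiv k r : MvPolynomial (Fin (r + 1)) k ≃ₐ[k] _) :
        MvPolynomial (Fin (r + 1)) k →+* Polynomial (MvPolynomial (Fin r) k)) =
      RingHom.id _ := by
    apply MvPolynomial.ringHom_ext
    · intro a
      simp [finSuccEquiv_apply]
    · intro i
      induction i using Fin.cases with
      | zero =>
        simp only [RingHom.comp_apply, RingHom.coe_coe, RingHom.id_apply]
        rw [finSuccEquiv_X_zero, Polynomial.coe_eval₂RingHom, Polynomial.eval₂_X]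
      | succ j =>
        simp only [RingHom.comp_apply, RingHom.coe_coe, RingHom.id_apply]
        rw [finSuccEquiv_X_succ, Polynomial.coe_eval₂RingHom, Polynomial.eval₂_C, RingHom.coe_coe, rename_X]
  exact RingHom.congr_fun key h

theorem exists_good_subst [Infinite k] {r : ℕ} (f : MvPolynomial (Fin (r + 1)) k)
    (hf : f ≠ 0) (hd1 : 1 ≤ f.totalDegree) :
    ∃ (ψ : MvPolynomial (Fin (r + 1)) k ≃ₐ[k] MvPolynomial (Fin (r + 1)) k)
      (g : Polynomial (MvPolynomial (Fin r) k)), g.Monic ∧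
      Polynomial.eval₂
        ((rename (Fin.succ : Fin r → Fin (r + 1)) : MvPolynomial (Fin r) k →ₐ[k] _) :
          MvPolynomial (Fin r) k →+* MvPolynomial (Fin (r + 1)) k)
        (X 0) g ∈ Ideal.span {ψ f} := by
  classical
  set d := f.totalDegree with hd
  set fd := homogeneousComponent d f with hfd_def
  have hfd : fd ≠ 0 := homogeneousComponent_totalDegree_ne_zero hf
  have hhom_fd : fd.IsHomogeneous d := homogeneousComponent_isHomogeneous d f
  have hX0fd : (X 0 * fd : MvPolynomial (Fin (r + 1)) k) ≠ 0 := mul_ne_zero (X_ne_zero _) hfd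
  have hhomX : (X 0 * fd).IsHomogeneous (1 + d) := (isHomogeneous_X _ _).mul hhom_fd
  obtain ⟨v, hv⟩ : ∃ v : Fin (r + 1) → k, eval v (X 0 * fd) ≠ 0 := by
    by_contra h
    push_neg at h
    exact hX0fd (hhomX.eq_zero_of_forall_eval_eq_zero h)
  rw [eval_mul, eval_X] at hv
  have hv0 : v 0 ≠ 0 := fun h => hv (by rw [h, zero_mul])
  have hvfd : eval v fd ≠ 0 := fun h => hv (by rw [h, mul_zero])
  set c := eval v fd with hc
  set F := sub1 v f with hF
  set Q := finSuccEquiv k r F with hQ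
  have hFdeg : F.totalDegree ≤ d := sub1_totalDegree_le v f
  have hQnat : Q.natDegree ≤ d := by
    rw [hQ, natDegree_finSuccEquiv]
    exact le_trans (degreeOf_le_totalDegree F 0) hFdeg
  have claim2 : Q.coeff d = MvPolynomial.C c := by
    have hsplit : F = ∑ e ∈ Finset.range (d + 1), sub1 v (homogeneousComponent e f) := by
      rw [← map_sum, sum_homogeneousComponent]
    rw [hQ, hsplit, map_sum]
    rw [Polynomial.finset_sum_coeff, Finset.sum_range_succ]
    have hzero : ∀ e ∈ Finset.range d,
        (finSuccEquiv k r (sub1 v (homogeneousComponent e f))).coeff d = 0 := by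
      intro e he
      apply Polynomial.coeff_eq_zero_of_natDegree_lt
      rw [natDegree_finSuccEquiv]
      refine lt_of_le_of_lt (le_trans (degreeOf_le_totalDegree _ 0)
        (le_trans (sub1_totalDegree_le v _)
          (homogeneousComponent_isHomogeneous e f).totalDegree_le)) ?_
      exact Finset.mem_range.mp he
    rw [Finset.sum_eq_zero hzero, zero_add]
    have hhomsub : (sub1 v fd).IsHomogeneous d := sub1_isHomogeneous v hhom_fd
    have hT : ((finSuccEquiv k r (sub1 v fd)).coeff d).IsHomogeneous 0 :=
      hhomsub.finSuccEquiv_coeff_isHomogeneous d 0 (add_zero d)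
    rw [isHomogeneous_zero_eq_C hT]
    congr 1
    rw [finSuccEquiv_coeff_coeff, cons_eq_single, coeff_single_zero_eq_eval hhomsub,
      eval_cons_one_sub1]
  have hCc : (MvPolynomial.C c : MvPolynomial (Fin r) k) ≠ 0 := by
    simpa using hvfd
  have claim3 : Q.natDegree = d :=
    le_antisymm hQnat (Polynomial.le_natDegree_of_ne_zero (by rw [claim2]; exact hCc))
  refine ⟨sub1Equiv v hv0, Polynomial.C (MvPolynomial.C c⁻¹) * Q, ?_, ?_⟩
  · rw [Polynomial.Monic, Polynomial.leadingCoeff_mul, Polynomial.leadingCoeff_C,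
      Polynomial.leadingCoeff, claim3, claim2, ← map_mul, inv_mul_cancel₀ hvfd, map_one]
  · rw [Polynomial.eval₂_mul, Polynomial.eval₂_C, sub1Equiv_apply, ← hF, hQ,
      eval₂_finSuccEquiv]
    exact Ideal.mem_span_singleton.mpr (dvd_mul_left _ _)



theorem chain_le [Infinite k] :
    ∀ (r s : ℕ) (p : Fin (s + 1) → Ideal (MvPolynomial (Fin r) k)),
      (∀ i, (p i).IsPrime) → StrictMono p → s ≤ r := by
  intro r
  induction r with
  | zero =>
    intro s p hp hmono
    by_contra hs
    push_neg at hs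
    have hbot : ∀ i, p i = ⊥ := by
      intro i
      haveI := hp i
      set e : MvPolynomial (Fin 0) k ≃+* k := isEmptyRingEquiv k (Fin 0) with he
      set er : MvPolynomial (Fin 0) k →+* k := (e : MvPolynomial (Fin 0) k →+* k) with her
      have hker : RingHom.ker er = ⊥ := RingHom.ker_coe_equiv e
      have hsurj : Function.Surjective er := e.surjective
      haveI hprime : ((p i).map er).IsPrime :=
        Ideal.map_isPrime_of_surjective hsurj (by rw [hker]; exact bot_le)
      have hmapbot : (p i).map er = ⊥ := Ideal.eq_bot_of_prime _
      have hcm := Ideal.comap_map_of_surjective er hsurj (p i)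
      rw [hmapbot] at hcm
      have hcb : Ideal.comap er ⊥ = ⊥ := by
        rw [← RingHom.ker_eq_comap_bot, hker]
      rw [hcb, sup_eq_left.mpr bot_le] at hcm
      exact hcm.symm
    have h01 : (⟨0, by omega⟩ : Fin (s + 1)) < ⟨1, by omega⟩ := by
      simp [Fin.lt_def]
    have := hmono h01
    rw [hbot, hbot] at this
    exact lt_irrefl _ this
  | succ r ih =>
    -- inner key lemma: chains of primes all containing a fixed nonzero f have length ≤ r
    have key : ∀ (s : ℕ) (q : Fin (s + 1) → Ideal (MvPolynomial (Fin (r + 1)) k)),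
        (∀ i, (q i).IsPrime) → StrictMono q →
        ∀ f : MvPolynomial (Fin (r + 1)) k, f ≠ 0 → f ∈ q 0 → s ≤ r := by
      intro s q hq hmono f hf hfq
      rcases Nat.eq_zero_or_pos f.totalDegree with hdeg0 | hdeg1
      · exfalso
        have hfC : f = C (coeff 0 f) :=
          isHomogeneous_zero_eq_C ((totalDegree_zero_iff_isHomogeneous _).mp hdeg0)
        have ha : coeff 0 f ≠ 0 := fun h => hf (by rw [hfC, h, map_zero])
        have hunit : IsUnit f := by
          rw [hfC]; exact (isUnit_iff_ne_zero.mpr ha).map C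
        exact (hq 0).ne_top (Ideal.eq_top_of_isUnit_mem _ hfq hunit)
      · obtain ⟨ψ, g, hg, hgmem⟩ := exists_good_subst f hf hdeg1
        let ρ : MvPolynomial (Fin r) k →+* MvPolynomial (Fin (r + 1)) k :=
          ((rename (Fin.succ : Fin r → Fin (r + 1)) :
            MvPolynomial (Fin r) k →ₐ[k] MvPolynomial (Fin (r + 1)) k) : _ →+* _)
        let ψr : MvPolynomial (Fin (r + 1)) k →+* MvPolynomial (Fin (r + 1)) k :=
          ((ψ : MvPolynomial (Fin (r + 1)) k →ₐ[k] MvPolynomial (Fin (r + 1)) k) : _ →+* _)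
        have hψsurj : Function.Surjective ψr := ψ.surjective
        have hψker : RingHom.ker ψr = ⊥ :=
          (RingHom.injective_iff_ker_eq_bot ψr).mp ψ.injective
        let F : MvPolynomial (Fin (r + 1)) k := ψ f
        let q1 : Fin (s + 1) → Ideal (MvPolynomial (Fin (r + 1)) k) := fun i => (q i).map ψr
        have hq1p : ∀ i, (q1 i).IsPrime := fun i => by
          haveI := hq i
          exact Ideal.map_isPrime_of_surjective hψsurj (by rw [hψker]; exact bot_le)
        have hq1mono : StrictMono q1 := fun i j hij =>
          map_lt_map_of_surjective _ hψsurj (by rw [hψker]; exact bot_le) (hmono hij)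
        have hFq1 : ∀ i, F ∈ q1 i := fun i =>
          Ideal.mem_map_of_mem _ (hmono.monotone (Fin.zero_le i) hfq)
        let I : Ideal (MvPolynomial (Fin (r + 1)) k) := Ideal.span {F}
        have hIle : ∀ i, I ≤ q1 i := fun i =>
          (Ideal.span_le).mpr (Set.singleton_subset_iff.mpr (hFq1 i))
        letI : Algebra (MvPolynomial (Fin r) k) (MvPolynomial (Fin (r + 1)) k) := ρ.toAlgebra
        have halg : algebraMap (MvPolynomial (Fin r) k) (MvPolynomial (Fin (r + 1)) k ⧸ I) =
          (Ideal.Quotient.mk I).comp ρ := rfl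
        let x₀ : MvPolynomial (Fin (r + 1)) k ⧸ I := Ideal.Quotient.mk I (X 0)
        have hx₀ : IsIntegral (MvPolynomial (Fin r) k) x₀ := by
          refine ⟨g, hg, ?_⟩
          rw [halg]
          have := (Polynomial.hom_eval₂ g ρ (Ideal.Quotient.mk I) (X 0)).symm
          rw [this]
          exact Ideal.Quotient.eq_zero_iff_mem.mpr hgmem
        have hSint : ∀ z : MvPolynomial (Fin (r + 1)) k ⧸ I,
            IsIntegral (MvPolynomial (Fin r) k) z := by
          have hadj : Algebra.adjoin (MvPolynomial (Fin r) k) ({x₀} : Set _) = ⊤ := by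
            rw [eq_top_iff]
            rintro z -
            obtain ⟨p', rfl⟩ := Ideal.Quotient.mk_surjective z
            induction p' using MvPolynomial.induction_on with
            | C a =>
              have hCa : (MvPolynomial.C a : MvPolynomial (Fin (r + 1)) k) =
                  ρ (MvPolynomial.C a) := by
                simp [ρ, RingHom.coe_coe]
              rw [hCa]
              exact Subalgebra.algebraMap_mem _ (MvPolynomial.C a)
            | add p'' q'' hp'' hq'' =>
              rw [RingHom.map_add]; exact add_mem hp'' hq''
            | mul_X p'' i hp'' =>
              rw [RingHom.map_mul]
              refine mul_mem hp'' ?_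
              induction i using Fin.cases with
              | zero => exact Algebra.subset_adjoin (Set.mem_singleton _)
              | succ j =>
                have hXj : (X j.succ : MvPolynomial (Fin (r + 1)) k) = ρ (X j) := by
                  simp [ρ, RingHom.coe_coe]
                rw [hXj]
                exact Subalgebra.algebraMap_mem _ (X j)
          intro z
          have hle : Algebra.adjoin (MvPolynomial (Fin r) k) ({x₀} : Set _) ≤
              integralClosure (MvPolynomial (Fin r) k) _ :=
            Algebra.adjoin_le (Set.singleton_subset_iff.mpr hx₀)
          exact (mem_integralClosure_iff _ _).mp (hle (hadj ▸ Algebra.mem_top))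
        let q2 : Fin (s + 1) → Ideal (MvPolynomial (Fin (r + 1)) k ⧸ I) :=
          fun i => (q1 i).map (Ideal.Quotient.mk I)
        have hq2p : ∀ i, (q2 i).IsPrime := fun i => by
          haveI := hq1p i
          exact Ideal.map_isPrime_of_surjective Ideal.Quotient.mk_surjective
            (by rw [Ideal.mk_ker]; exact hIle i)
        have hq2mono : StrictMono q2 := fun i j hij =>
          map_lt_map_of_surjective _ Ideal.Quotient.mk_surjective
            (by rw [Ideal.mk_ker]; exact hIle i) (hq1mono hij)
        let q3 : Fin (s + 1) → Ideal (MvPolynomial (Fin r) k) :=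
          fun i => (q2 i).comap (algebraMap (MvPolynomial (Fin r) k) _)
        have hq3p : ∀ i, (q3 i).IsPrime := fun i => by
          haveI := hq2p i
          exact Ideal.IsPrime.comap _
        have hq3mono : StrictMono q3 := by
          intro i j hij
          haveI := hq2p i
          obtain ⟨x, hxj, hxi⟩ := SetLike.exists_of_lt (hq2mono hij)
          exact Ideal.comap_lt_comap_of_integral_mem_sdiff (hq2mono hij).le ⟨hxj, hxi⟩ (hSint x)
        exact ih s q3 hq3p hq3mono
    intro s p hp hmono
    match s, p, hp, hmono with
    | 0, p, hp, hmono => omega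
    | (s' + 1), p, hp, hmono =>
      rcases eq_or_ne (p 0) ⊥ with hbot | hne
      · have h01 : (0 : Fin (s' + 2)) < 1 := by simp [Fin.lt_def]
        obtain ⟨f, hf1, hf0⟩ := SetLike.exists_of_lt (hmono h01)
        have hfne : f ≠ 0 := fun h => hf0 (by rw [h, hbot]; exact Submodule.zero_mem _)
        have hsub : s' ≤ r := by
          refine key s' (fun i => p i.succ) (fun i => hp _)
            (fun i j hij => hmono (Fin.succ_lt_succ_iff.mpr hij)) f hfne ?_
          exact hf1
        omega
      · obtain ⟨f, hfmem, hfne⟩ := Submodule.exists_mem_ne_zero_of_ne_bot hne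
        have := key (s' + 1) p hp hmono f hfne hfmem
        omega


theorem chain_le_card [Infinite k] {σ : Type*} [Fintype σ] (s : ℕ)
    (p : Fin (s + 1) → Ideal (MvPolynomial σ k))
    (hp : ∀ i, (p i).IsPrime) (hmono : StrictMono p) : s ≤ Fintype.card σ := by
  let e : MvPolynomial σ k ≃ₐ[k] MvPolynomial (Fin (Fintype.card σ)) k :=
    renameEquiv k (Fintype.equivFin σ)
  let er : MvPolynomial σ k →+* MvPolynomial (Fin (Fintype.card σ)) k :=
    e.toAlgHom.toRingHom
  have hsurj : Function.Surjective er := e.surjective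
  have hker : RingHom.ker er = ⊥ := (RingHom.injective_iff_ker_eq_bot er).mp e.injective
  refine chain_le (Fintype.card σ) s (fun i => (p i).map er) (fun i => ?_) ?_
  · haveI := hp i
    exact Ideal.map_isPrime_of_surjective hsurj (by rw [hker]; exact bot_le)
  · exact fun i j hij =>
      map_lt_map_of_surjective _ hsurj (by rw [hker]; exact bot_le) (hmono hij)

theorem exists_transcendental [Infinite k] (m n t : ℕ) (hn : 1 ≤ n)
    (P : Ideal (MvPolynomial (Fin m ⊕ Fin n) k)) [hP : P.IsPrime]
    (hdim : ringKrullDim (MvPolynomial (Fin m ⊕ Fin n) k ⧸ P) = ((n + t : ℕ) : WithBot ℕ∞))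
    (C₀ : MvPolynomial (Fin m ⊕ Fin n) k) (D : MvPolynomial (Fin m) k)
    (hD : rename Sum.inl D = C₀)
    (hP0 : MvPolynomial.X (Sum.inr ⟨0, hn⟩) - C₀ ∈ P) :
    ∃ i : Fin m, Transcendental k
      (Ideal.Quotient.mkₐ k P (MvPolynomial.X (Sum.inl i))) := by
  classical
  set A := MvPolynomial (Fin m ⊕ Fin n) k ⧸ P with hA
  set mkq := Ideal.Quotient.mkₐ k P with hmkq
  set j0 : Fin n := ⟨0, hn⟩ with hj0
  by_contra hcon
  push_neg at hcon
  have hxint : ∀ i : Fin m, IsIntegral k (mkq (X (Sum.inl i))) := fun i =>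
    isAlgebraic_iff_isIntegral.mp (not_not.mp (hcon i))
  -- z_{j0} is integral
  have hz0eq : mkq (X (Sum.inr j0)) = mkq C₀ := by
    rw [Ideal.Quotient.mkₐ_eq_mk, Ideal.Quotient.mk_eq_mk_iff_sub_mem]
    exact hP0
  have hcomp : (mkq.comp (rename (Sum.inl : Fin m → Fin m ⊕ Fin n)) :
      MvPolynomial (Fin m) k →ₐ[k] A) =
      aeval (fun i => mkq (X (Sum.inl i))) := by
    apply MvPolynomial.algHom_ext
    intro i
    simp
  have hz0mem : mkq C₀ ∈ Algebra.adjoin k (Set.range fun i => mkq (X (Sum.inl i))) := by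
    rw [Algebra.adjoin_range_eq_range_aeval, ← hcomp]
    exact ⟨D, by simp [hD]⟩
  have hz0int : IsIntegral k (mkq (X (Sum.inr j0))) := by
    rw [hz0eq]
    have hle : Algebra.adjoin k (Set.range fun i => mkq (X (Sum.inl i))) ≤
        integralClosure k A := by
      apply Algebra.adjoin_le
      rintro _ ⟨i, rfl⟩
      exact hxint i
    exact (mem_integralClosure_iff k A).mp (hle hz0mem)
  -- the subalgebra B generated by the other z's
  set w : {j : Fin n // j ≠ j0} → A := fun j => mkq (X (Sum.inr j.1)) with hw
  set B : Subalgebra k A := (aeval w).range with hB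
  have hwB : ∀ (j : Fin n) (hj : j ≠ j0), mkq (X (Sum.inr j)) ∈ B :=
    fun j hj => ⟨X ⟨j, hj⟩, by simp [hw]⟩
  -- A is generated by the images of all variables
  have hT : Algebra.adjoin k (Set.range fun s : Fin m ⊕ Fin n => mkq (X s)) = ⊤ := by
    rw [Algebra.adjoin_range_eq_range_aeval]
    have : aeval (fun s : Fin m ⊕ Fin n => mkq (X s)) = mkq := (aeval_unique mkq).symm
    rw [this]
    exact (AlgHom.range_eq_top _).mpr (Ideal.Quotient.mkₐ_surjective k P)
  -- every element of A is integral over B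
  have hAint : ∀ a : A, IsIntegral B a := by
    have hgen : (⊤ : Subalgebra k A) ≤
        Subalgebra.restrictScalars k (integralClosure B A) := by
      rw [← hT]
      apply Algebra.adjoin_le
      rintro _ ⟨s, rfl⟩
      simp only [SetLike.mem_coe]
      rw [Subalgebra.mem_restrictScalars, mem_integralClosure_iff]
      cases s with
      | inl i => exact (hxint i).tower_top
      | inr j =>
        by_cases hj : j = j0
        · rw [hj]; exact hz0int.tower_top
        · have : mkq (X (Sum.inr j)) = algebraMap B A ⟨mkq (X (Sum.inr j)), hwB j hj⟩ := rfl
          rw [this]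
          exact isIntegral_algebraMap
    intro a
    have := hgen (Algebra.mem_top : a ∈ ⊤)
    rwa [Subalgebra.mem_restrictScalars, mem_integralClosure_iff] at this
  -- bound the Krull dimension
  have hcard : Fintype.card {j : Fin n // j ≠ j0} = n - 1 := by
    have := Fintype.card_subtype_compl (fun j : Fin n => j = j0)
    simpa [Fintype.card_subtype_eq] using this
  have hle : ringKrullDim A ≤ ((n - 1 : ℕ) : WithBot ℕ∞) := by
    rw [ringKrullDim, Order.krullDim]
    apply iSup_le
    intro pser
    set s := pser.length with hs
    let π : MvPolynomial {j : Fin n // j ≠ j0} k →ₐ[k] B := (aeval w).rangeRestrict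
    have hπ : Function.Surjective π := AlgHom.rangeRestrict_surjective _
    let Q : Fin (s + 1) → Ideal (MvPolynomial {j : Fin n // j ≠ j0} k) := fun i =>
      (((pser.toFun i).asIdeal.comap (algebraMap B A)).comap (π : _ →+* B))
    have hQp : ∀ i, (Q i).IsPrime := fun i => by
      haveI := (pser.toFun i).isPrime
      exact Ideal.IsPrime.comap _
    have hQmono : StrictMono Q := by
      intro i j hij
      have hlt : (pser.toFun i).asIdeal < (pser.toFun j).asIdeal := pser.strictMono hij
      haveI := (pser.toFun i).isPrime
      obtain ⟨x, hxj, hxi⟩ := SetLike.exists_of_lt hlt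
      exact comap_lt_comap_of_surjective _ hπ
        (Ideal.comap_lt_comap_of_integral_mem_sdiff hlt.le ⟨hxj, hxi⟩ (hAint x))
    have := chain_le_card s Q hQp hQmono
    rw [hcard] at this
    exact_mod_cast this
  rw [hdim] at hle
  have : n + t ≤ n - 1 := by exact_mod_cast hle
  omega

end Stmt0Aux

open Stmt0Aux in
/-- Let `k` be an infinite field, `m, n ≥ 1`, `t, N ≥ 0`, and let
`P ⊆ R = k[X_1,…,X_m,Z_1,…,Z_n]` be a prime ideal with `dim (R ⧸ P) = n + t`.
If there is some `C₀ ∈ k[X]_{≤N}` with `Z_1 - C₀ ∈ P`, then the image of `k[X]_{≤N}` in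
`R ⧸ P` has `k`-dimension `≥ N + 1` (equivalently, `k[X]_{≤N} ∩ P` has codimension `≥ N + 1`
in `k[X]_{≤N}`); consequently, `{C ∈ k[X]_{≤N} : Z_1 - C ∈ P}` is a coset of
`k[X]_{≤N} ∩ P`, an affine subspace of codimension `≥ N + 1`. -/
theorem stmt0 (k : Type*) [Field k] [Infinite k] (m n t N : ℕ) (hm : 1 ≤ m) (hn : 1 ≤ n)
    (P : Ideal (MvPolynomial (Fin m ⊕ Fin n) k)) (hP : P.IsPrime)
    (hdim : ringKrullDim (MvPolynomial (Fin m ⊕ Fin n) k ⧸ P) = ((n + t : ℕ) : WithBot ℕ∞))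
    (hexists : ∃ C₀ ∈ degLE k m n N, MvPolynomial.X (Sum.inr ⟨0, hn⟩) - C₀ ∈ P) :
    (((N + 1 : ℕ) : Cardinal) ≤
      Module.rank k ((degLE k m n N).map (Ideal.Quotient.mkₐ k P).toLinearMap)) ∧
    ∀ C₀ ∈ degLE k m n N, MvPolynomial.X (Sum.inr ⟨0, hn⟩) - C₀ ∈ P →
      {C | C ∈ degLE k m n N ∧ MvPolynomial.X (Sum.inr ⟨0, hn⟩) - C ∈ P} =
        C₀ +ᵥ ((degLE k m n N ⊓ P.restrictScalars k : Submodule k _) : Set _) := by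
  haveI := hP
  obtain ⟨C₀, hC₀mem, hC₀P⟩ := hexists
  obtain ⟨D, hD1, hD2⟩ := Submodule.mem_map.mp hC₀mem
  obtain ⟨i₀, htr⟩ := exists_transcendental m n t hn P hdim C₀ D hD2 hC₀P
  constructor
  · -- rank bound
    set M := (degLE k m n N).map (Ideal.Quotient.mkₐ k P).toLinearMap with hM
    have hmem : ∀ j : Fin (N + 1),
        Ideal.Quotient.mkₐ k P (MvPolynomial.X (Sum.inl i₀) ^ (j : ℕ)) ∈ M := by
      intro j
      refine Submodule.mem_map.mpr ⟨MvPolynomial.X (Sum.inl i₀) ^ (j : ℕ), ?_, rfl⟩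
      refine Submodule.mem_map.mpr ⟨MvPolynomial.X i₀ ^ (j : ℕ), ?_, ?_⟩
      · rw [mem_restrictTotalDegree]
        rw [totalDegree_X_pow]
        omega
      · rw [AlgHom.toLinearMap_apply, map_pow, rename_X]
    let v : Fin (N + 1) → M := fun j => ⟨_, hmem j⟩
    have hli : LinearIndependent k v := by
      apply LinearIndependent.of_comp M.subtype
      have hcomp : (M.subtype ∘ v) =
          fun j : Fin (N + 1) => (Ideal.Quotient.mkₐ k P (MvPolynomial.X (Sum.inl i₀))) ^ (j : ℕ) := by
        funext j
        simp [v, map_pow]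
      rw [hcomp]
      exact linearIndependent_pow htr N
    have hlift := hli.cardinal_lift_le_rank
    simpa using hlift
  · intro C₀' hmem' hP'
    ext C
    simp only [Set.mem_setOf_eq]
    constructor
    · rintro ⟨hC1, hC2⟩
      refine Set.mem_vadd_set.mpr ⟨C - C₀', ?_, by rw [vadd_eq_add]; abel⟩
      refine Submodule.mem_inf.mpr ⟨sub_mem hC1 hmem', ?_⟩
      have heq : (MvPolynomial.X (Sum.inr ⟨0, hn⟩) - C₀') -
          (MvPolynomial.X (Sum.inr ⟨0, hn⟩) - C) = C - C₀' := by ring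
      show C - C₀' ∈ P
      rw [← heq]
      exact sub_mem hP' hC2
    · intro hCmem
      obtain ⟨y, hy, rfl⟩ := Set.mem_vadd_set.mp hCmem
      obtain ⟨hy1, hy2⟩ := Submodule.mem_inf.mp hy
      rw [vadd_eq_add]
      constructor
      · exact add_mem hmem' hy1
      · have heq : MvPolynomial.X (Sum.inr ⟨0, hn⟩) - (C₀' + y) =
            (MvPolynomial.X (Sum.inr ⟨0, hn⟩) - C₀') - y := by ring
        rw [heq]
        exact sub_mem hP' hy2
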